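/- For Λ₁, Λ₂ ∈ (0,1) define Π₀(Λ₁,Λ₂) = (4/π²)(Λ₁+Λ₂) K(Λ₁²) K(1−Λ₂²), Π₁(Λ₁,Λ₂) = (4i/π²)(Λ₁+Λ₂) K(1−Λ₁²) K(1−Λ₂²), Π₂(Λ₁,Λ₂) = (4i/π²)(Λ₁+Λ₂) K(Λ₁²) K(Λ₂²), Π₃(Λ₁,Λ₂) = −(4/π²)(Λ₁+Λ₂) K(1−Λ₁²) K(Λ₂²). If c₀, c₁, c₂, c₃ ∈ ℂ are such that c₀Π₀(Λ₁,Λ₂) + c₁Π₁(Λ₁,Λ₂) + c₂Π₂(Λ₁,Λ₂) + c₃Π₃(Λ₁,Λ₂) = 0 for all (Λ₁,Λ₂) in some nonempty open subset of (0,1)², then c₀ = c₁ = c₂ = c₃ = 0. In other words, the four period functions Π₀, Π₁, Π₂, Π₃ are linearly independent over ℂ. -/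

import Mathlib

/-- The Pochhammer symbol (rising factorial) `(a)_n = a (a+1) ⋯ (a+n-1)`. -/
noncomputable def pochC (a : ℂ) (n : ℕ) : ℂ := ∏ i ∈ Finset.range n, (a + i)

/-- The Gauss hypergeometric function `₂F₁(a,b;c;z)`, defined by its series. -/
noncomputable def hyp2F1C (a b c z : ℂ) : ℂ :=
  ∑' n : ℕ, pochC a n * pochC b n / (pochC c n * n.factorial) * z ^ n

/-- The complete elliptic integral of the first kind `K(z) = (π/2)·₂F₁(1/2,1/2;1;z)`. -/
noncomputable def ellipticKC (z : ℂ) : ℂ :=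
  (Real.pi : ℂ) / 2 * hyp2F1C (1 / 2) (1 / 2) 1 z

/-- The four period functions `Π₀, Π₁, Π₂, Π₃` of the traintrack K3 family. -/
noncomputable def trainPeriod (j : Fin 4) (Λ₁ Λ₂ : ℝ) : ℂ :=
  match j with
  | 0 => 4 / (Real.pi : ℂ) ^ 2 * ((Λ₁ : ℂ) + (Λ₂ : ℂ)) *
      ellipticKC ((Λ₁ : ℂ) ^ 2) * ellipticKC (1 - (Λ₂ : ℂ) ^ 2)
  | 1 => 4 * Complex.I / (Real.pi : ℂ) ^ 2 * ((Λ₁ : ℂ) + (Λ₂ : ℂ)) *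
      ellipticKC (1 - (Λ₁ : ℂ) ^ 2) * ellipticKC (1 - (Λ₂ : ℂ) ^ 2)
  | 2 => 4 * Complex.I / (Real.pi : ℂ) ^ 2 * ((Λ₁ : ℂ) + (Λ₂ : ℂ)) *
      ellipticKC ((Λ₁ : ℂ) ^ 2) * ellipticKC ((Λ₂ : ℂ) ^ 2)
  | 3 => -(4 / (Real.pi : ℂ) ^ 2) * ((Λ₁ : ℂ) + (Λ₂ : ℂ)) *
      ellipticKC (1 - (Λ₁ : ℂ) ^ 2) * ellipticKC ((Λ₂ : ℂ) ^ 2)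

/-- real Pochhammer for 1/2 -/
noncomputable def pochR (n : ℕ) : ℝ := ∏ i ∈ Finset.range n, ((1:ℝ)/2 + i)

noncomputable def wgt (n : ℕ) : ℝ := (pochR n / n.factorial) ^ 2

noncomputable def gser (t : ℝ) : ℝ := ∑' n : ℕ, wgt n * t ^ n

lemma pochR_pos (n : ℕ) : 0 < pochR n := by
  apply Finset.prod_pos; intro i _; positivity

lemma pochR_le (n : ℕ) : pochR n ≤ n.factorial := by
  induction n with
  | zero => simp [pochR]
  | succ k ih =>
    rw [pochR, Finset.prod_range_succ, Nat.factorial_succ]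
    push_cast
    calc (∏ i ∈ Finset.range k, ((1:ℝ)/2 + i)) * (1/2 + k) ≤ (k.factorial : ℝ) * (1/2 + k) := by
          apply mul_le_mul_of_nonneg_right (by simpa [pochR] using ih); positivity
      _ ≤ ((k:ℝ) + 1) * k.factorial := by
          rw [mul_comm]; apply mul_le_mul_of_nonneg_right (by linarith) (by positivity)

lemma wgt_pos (n : ℕ) : 0 < wgt n := by
  have := pochR_pos n
  have : pochR n / n.factorial > 0 := by positivity
  unfold wgt; positivity

lemma wgt_le_one (n : ℕ) : wgt n ≤ 1 := by
  unfold wgt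
  have h1 : pochR n / n.factorial ≤ 1 := by
    rw [div_le_one (by positivity)]; exact pochR_le n
  have h0 : 0 ≤ pochR n / n.factorial := le_of_lt (by have := pochR_pos n; positivity)
  calc (pochR n / n.factorial)^2 ≤ 1^2 := by apply pow_le_pow_left₀ h0 h1
    _ = 1 := one_pow 2

lemma summable_g {t : ℝ} (ht0 : 0 ≤ t) (ht1 : t < 1) : Summable (fun n : ℕ => wgt n * t ^ n) := by
  apply Summable.of_nonneg_of_le (fun n => by have := (wgt_pos n).le; positivity)
    (fun n => ?_) (summable_geometric_of_lt_one ht0 ht1)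
  calc wgt n * t ^ n ≤ 1 * t ^ n := by
        apply mul_le_mul_of_nonneg_right (wgt_le_one n) (by positivity)
    _ = t ^ n := one_mul _

lemma pochC_one (n : ℕ) : pochC 1 n = (n.factorial : ℂ) := by
  induction n with
  | zero => simp [pochC]
  | succ k ih => rw [pochC, Finset.prod_range_succ, ← pochC, ih, Nat.factorial_succ]; push_cast; ring

lemma pochC_half (n : ℕ) : pochC (1/2) n = (pochR n : ℂ) := by
  rw [pochC, pochR, Complex.ofReal_prod]
  push_cast
  rfl

lemma hyp_eq (t : ℝ) : hyp2F1C (1/2) (1/2) 1 (t : ℂ) = (gser t : ℂ) := by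
  rw [gser, hyp2F1C, Complex.ofReal_tsum]
  congr 1; ext n
  rw [pochC_half, pochC_one]
  have hf : ((n.factorial : ℝ) : ℂ) ≠ 0 := by
    exact_mod_cast Nat.cast_ne_zero.mpr n.factorial_ne_zero
  push_cast [wgt]
  field_simp

/-- real elliptic K on (0,1) -/
noncomputable def Kr (t : ℝ) : ℝ := Real.pi / 2 * gser t

lemma ellipticKC_real (t : ℝ) : ellipticKC (t : ℂ) = (Kr t : ℂ) := by
  rw [ellipticKC, hyp_eq, Kr]; push_cast; ring

lemma gser_ge_one {t : ℝ} (ht0 : 0 ≤ t) (ht1 : t < 1) : 1 ≤ gser t := by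
  have h := Summable.le_tsum (summable_g ht0 ht1) 0 (fun j _ => by have := (wgt_pos j).le; positivity)
  have h0 : wgt 0 * t ^ 0 = 1 := by norm_num [wgt, pochR]
  rw [h0] at h
  exact h

lemma gser_lt {t u : ℝ} (ht0 : 0 ≤ t) (htu : t < u) (hu1 : u < 1) : gser t < gser u := by
  have hu0 : 0 ≤ u := le_trans ht0 htu.le
  apply Summable.tsum_lt_tsum (i := 1) ?_ ?_ (summable_g ht0 (htu.trans hu1)) (summable_g hu0 hu1)
  · intro n
    exact mul_le_mul_of_nonneg_left (pow_le_pow_left₀ ht0 htu.le n) (wgt_pos n).le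
  · have : wgt 1 = 1/4 := by norm_num [wgt, pochR]
    simp only [this, pow_one]
    linarith

lemma Kr_pos {t : ℝ} (ht0 : 0 ≤ t) (ht1 : t < 1) : 0 < Kr t := by
  have := gser_ge_one ht0 ht1
  have hπ := Real.pi_pos
  unfold Kr; nlinarith

lemma Kr_lt {t u : ℝ} (ht0 : 0 ≤ t) (htu : t < u) (hu1 : u < 1) : Kr t < Kr u := by
  have := gser_lt ht0 htu hu1
  have hπ := Real.pi_pos
  unfold Kr; nlinarith

lemma bracket_zero (c₀ c₁ c₂ c₃ : ℂ) (u v : ℝ) (hu : 0 < u) (hv : 0 < v)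
    (h : c₀ * trainPeriod 0 u v + c₁ * trainPeriod 1 u v +
      c₂ * trainPeriod 2 u v + c₃ * trainPeriod 3 u v = 0) :
    c₀ * (Kr (u^2) : ℂ) * (Kr (1-v^2) : ℂ)
      + Complex.I * c₁ * (Kr (1-u^2) : ℂ) * (Kr (1-v^2) : ℂ)
      + Complex.I * c₂ * (Kr (u^2) : ℂ) * (Kr (v^2) : ℂ)
      - c₃ * (Kr (1-u^2) : ℂ) * (Kr (v^2) : ℂ) = 0 := by
  simp only [trainPeriod] at h
  have e1 : ((u:ℂ))^2 = ((u^2 : ℝ) : ℂ) := by push_cast; ring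
  have e2 : (1 : ℂ) - (u:ℂ)^2 = ((1 - u^2 : ℝ) : ℂ) := by push_cast; ring
  have e3 : ((v:ℂ))^2 = ((v^2 : ℝ) : ℂ) := by push_cast; ring
  have e4 : (1 : ℂ) - (v:ℂ)^2 = ((1 - v^2 : ℝ) : ℂ) := by push_cast; ring
  rw [e2, e4, e1, e3, ellipticKC_real, ellipticKC_real, ellipticKC_real, ellipticKC_real] at h
  have hπ : ((Real.pi : ℝ) : ℂ) ≠ 0 := Complex.ofReal_ne_zero.mpr Real.pi_ne_zero
  have huv : ((u : ℂ) + (v : ℂ)) ≠ 0 := by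
    have : ((u + v : ℝ) : ℂ) ≠ 0 := Complex.ofReal_ne_zero.mpr (by linarith)
    push_cast at this; exact this
  have key : 4 / (Real.pi : ℂ)^2 * ((u:ℂ) + (v:ℂ)) *
      (c₀ * (Kr (u^2) : ℂ) * (Kr (1-v^2) : ℂ)
      + Complex.I * c₁ * (Kr (1-u^2) : ℂ) * (Kr (1-v^2) : ℂ)
      + Complex.I * c₂ * (Kr (u^2) : ℂ) * (Kr (v^2) : ℂ)
      - c₃ * (Kr (1-u^2) : ℂ) * (Kr (v^2) : ℂ)) = 0 := by
    linear_combination h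
  have hfac : 4 / (Real.pi : ℂ)^2 * ((u:ℂ) + (v:ℂ)) ≠ 0 := by
    apply mul_ne_zero _ huv
    apply div_ne_zero (by norm_num) (pow_ne_zero _ hπ)
  exact (mul_eq_zero.mp key).resolve_left hfac


set_option maxHeartbeats 1000000 in
/-- The four period functions `Π₀, Π₁, Π₂, Π₃` of the traintrack K3 family are linearly
independent over `ℂ`: if a linear combination vanishes identically on a nonempty open
subset of `(0,1)²`, then all coefficients are zero. -/
theorem trainPeriods_linearly_independent
    (c₀ c₁ c₂ c₃ : ℂ) (s : Set (ℝ × ℝ)) (hs : IsOpen s) (hne : s.Nonempty)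
    (hsub : s ⊆ Set.Ioo (0 : ℝ) 1 ×ˢ Set.Ioo (0 : ℝ) 1)
    (h : ∀ p ∈ s,
      c₀ * trainPeriod 0 p.1 p.2 + c₁ * trainPeriod 1 p.1 p.2 +
        c₂ * trainPeriod 2 p.1 p.2 + c₃ * trainPeriod 3 p.1 p.2 = 0) :
    c₀ = 0 ∧ c₁ = 0 ∧ c₂ = 0 ∧ c₃ = 0 := by
  obtain ⟨p, hp⟩ := hne
  obtain ⟨ε, hε, hball⟩ := Metric.isOpen_iff.mp hs p hp
  set δ := ε / 2 with hδdef
  have hδ : 0 < δ := by positivity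
  have hmem : ∀ i j : ℝ, 0 ≤ i → i ≤ δ → 0 ≤ j → j ≤ δ → (p.1 + i, p.2 + j) ∈ s := by
    intro i j hi hi' hj hj'
    apply hball
    simp only [Metric.mem_ball, Prod.dist_eq, Real.dist_eq, max_lt_iff]
    constructor <;> · rw [abs_of_nonneg (by linarith)]; linarith
  -- the four sample points
  have q11 := hmem 0 0 le_rfl hδ.le le_rfl hδ.le
  have q12 := hmem 0 δ le_rfl hδ.le hδ.le le_rfl
  have q21 := hmem δ 0 hδ.le le_rfl le_rfl hδ.le
  have q22 := hmem δ δ hδ.le le_rfl hδ.le le_rfl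
  set u₁ := p.1 + 0 with hu₁
  set u₂ := p.1 + δ with hu₂
  set v₁ := p.2 + 0 with hv₁
  set v₂ := p.2 + δ with hv₂
  have hu1 : u₁ ∈ Set.Ioo (0:ℝ) 1 := (hsub q11).1
  have hu2 : u₂ ∈ Set.Ioo (0:ℝ) 1 := (hsub q21).1
  have hv1 : v₁ ∈ Set.Ioo (0:ℝ) 1 := (hsub q11).2
  have hv2 : v₂ ∈ Set.Ioo (0:ℝ) 1 := (hsub q12).2
  have e11 := h _ q11
  have e12 := h _ q12
  have e21 := h _ q21
  have e22 := h _ q22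
  have h11 := bracket_zero c₀ c₁ c₂ c₃ u₁ v₁ hu1.1 hv1.1 e11
  have h12 := bracket_zero c₀ c₁ c₂ c₃ u₁ v₂ hu1.1 hv2.1 e12
  have h21 := bracket_zero c₀ c₁ c₂ c₃ u₂ v₁ hu2.1 hv1.1 e21
  have h22 := bracket_zero c₀ c₁ c₂ c₃ u₂ v₂ hu2.1 hv2.1 e22
  set a₁ := Kr (u₁^2) with ha₁
  set a₂ := Kr (u₂^2) with ha₂
  set b₁ := Kr (1 - u₁^2) with hb₁
  set b₂ := Kr (1 - u₂^2) with hb₂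
  set A₁ := Kr (v₁^2) with hA₁
  set A₂ := Kr (v₂^2) with hA₂
  set B₁ := Kr (1 - v₁^2) with hB₁
  set B₂ := Kr (1 - v₂^2) with hB₂
  -- real inequalities
  have hsq : ∀ {x : ℝ}, x ∈ Set.Ioo (0:ℝ) 1 → x^2 ∈ Set.Ioo (0:ℝ) 1 := by
    intro x hx; exact ⟨pow_pos hx.1 2, by nlinarith [hx.1, hx.2]⟩
  have hu12 : u₁ < u₂ := by simp only [hu₁, hu₂]; linarith
  have hv12 : v₁ < v₂ := by simp only [hv₁, hv₂]; linarith
  have hsqu : u₁^2 < u₂^2 := by nlinarith [hu1.1, hu2.1]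
  have hsqv : v₁^2 < v₂^2 := by nlinarith [hv1.1, hv2.1]
  have ha : a₁ < a₂ := Kr_lt (hsq hu1).1.le hsqu (hsq hu2).2
  have hA : A₁ < A₂ := Kr_lt (hsq hv1).1.le hsqv (hsq hv2).2
  have hb : b₂ < b₁ := Kr_lt (by nlinarith [(hsq hu2).2]) (by linarith) (by nlinarith [(hsq hu1).1])
  have hB : B₂ < B₁ := Kr_lt (by nlinarith [(hsq hv2).2]) (by linarith) (by nlinarith [(hsq hv1).1])
  have ha₁p : 0 < a₁ := Kr_pos (hsq hu1).1.le (hsq hu1).2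
  have hA₁p : 0 < A₁ := Kr_pos (hsq hv1).1.le (hsq hv1).2
  have hb₁p : 0 < b₁ := Kr_pos (by nlinarith [(hsq hu1).2]) (by nlinarith [(hsq hu1).1])
  have hb₂p : 0 < b₂ := Kr_pos (by nlinarith [(hsq hu2).2]) (by nlinarith [(hsq hu2).1])
  have hB₂p : 0 < B₂ := Kr_pos (by nlinarith [(hsq hv2).2]) (by nlinarith [(hsq hv2).1])
  have hA₂p : 0 < A₂ := Kr_pos (hsq hv2).1.le (hsq hv2).2
  have hdetv : (0:ℝ) < B₁ * A₂ - B₂ * A₁ := by nlinarith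
  have hdetu : (0:ℝ) < b₁ * a₂ - b₂ * a₁ := by nlinarith
  have hdetvC : ((B₁:ℂ) * A₂ - (B₂:ℂ) * A₁) ≠ 0 := by
    have : ((B₁ * A₂ - B₂ * A₁ : ℝ) : ℂ) ≠ 0 := Complex.ofReal_ne_zero.mpr (ne_of_gt hdetv)
    push_cast at this; exact this
  have hdetuC : ((b₁:ℂ) * a₂ - (b₂:ℂ) * a₁) ≠ 0 := by
    have : ((b₁ * a₂ - b₂ * a₁ : ℝ) : ℂ) ≠ 0 := Complex.ofReal_ne_zero.mpr (ne_of_gt hdetu)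
    push_cast at this; exact this
  have hA₁C : ((A₁:ℝ) : ℂ) ≠ 0 := Complex.ofReal_ne_zero.mpr (ne_of_gt hA₁p)
  have hb₁C : ((b₁:ℝ) : ℂ) ≠ 0 := Complex.ofReal_ne_zero.mpr (ne_of_gt hb₁p)
  -- solve for α_i = c₀ a_i + I c₁ b_i and β_i = I c₂ a_i - c₃ b_i
  have hα₁ : c₀ * (a₁:ℂ) + Complex.I * c₁ * (b₁:ℂ) = 0 := by
    have hm : (c₀ * (a₁:ℂ) + Complex.I * c₁ * (b₁:ℂ)) * ((B₁:ℂ) * A₂ - (B₂:ℂ) * A₁) = 0 := by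
      linear_combination (A₂:ℂ) * h11 - (A₁:ℂ) * h12
    exact (mul_eq_zero.mp hm).resolve_right hdetvC
  have hα₂ : c₀ * (a₂:ℂ) + Complex.I * c₁ * (b₂:ℂ) = 0 := by
    have hm : (c₀ * (a₂:ℂ) + Complex.I * c₁ * (b₂:ℂ)) * ((B₁:ℂ) * A₂ - (B₂:ℂ) * A₁) = 0 := by
      linear_combination (A₂:ℂ) * h21 - (A₁:ℂ) * h22
    exact (mul_eq_zero.mp hm).resolve_right hdetvC
  have hβ₁ : Complex.I * c₂ * (a₁:ℂ) - c₃ * (b₁:ℂ) = 0 := by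
    have hm : (Complex.I * c₂ * (a₁:ℂ) - c₃ * (b₁:ℂ)) * (A₁:ℂ) = 0 := by
      linear_combination h11 - (B₁:ℂ) * hα₁
    exact (mul_eq_zero.mp hm).resolve_right hA₁C
  have hβ₂ : Complex.I * c₂ * (a₂:ℂ) - c₃ * (b₂:ℂ) = 0 := by
    have hm : (Complex.I * c₂ * (a₂:ℂ) - c₃ * (b₂:ℂ)) * (A₁:ℂ) = 0 := by
      linear_combination h21 - (B₁:ℂ) * hα₂
    exact (mul_eq_zero.mp hm).resolve_right hA₁C
  have hc₀ : c₀ = 0 := by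
    have hm : c₀ * ((b₁:ℂ) * a₂ - (b₂:ℂ) * a₁) = 0 := by
      linear_combination (b₁:ℂ) * hα₂ - (b₂:ℂ) * hα₁
    exact (mul_eq_zero.mp hm).resolve_right hdetuC
  have hc₁ : c₁ = 0 := by
    have hm : Complex.I * c₁ * (b₁:ℂ) = 0 := by
      linear_combination hα₁ - (a₁:ℂ) * hc₀
    have := (mul_eq_zero.mp hm).resolve_right hb₁C
    exact (mul_eq_zero.mp this).resolve_left Complex.I_ne_zero
  have hc₂ : c₂ = 0 := by
    have hm : Complex.I * c₂ * ((b₁:ℂ) * a₂ - (b₂:ℂ) * a₁) = 0 := by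
      linear_combination (b₁:ℂ) * hβ₂ - (b₂:ℂ) * hβ₁
    have := (mul_eq_zero.mp hm).resolve_right hdetuC
    exact (mul_eq_zero.mp this).resolve_left Complex.I_ne_zero
  have hc₃ : c₃ = 0 := by
    have hm : c₃ * (b₁:ℂ) = 0 := by
      linear_combination -hβ₁ + Complex.I * (a₁:ℂ) * hc₂
    exact (mul_eq_zero.mp hm).resolve_right hb₁C
  exact ⟨hc₀, hc₁, hc₂, hc₃⟩
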